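/- Let m ≥ 1 and let Θ be an m×m real matrix; set A := I − Θ. Assume the kernel of the linear map x ↦ Ax on ℝ^m has dimension 1, and let v, κ ∈ ℝ^m be nonzero with Aᵀv = 0, Aκ = 0 and ⟨v, κ⟩ ≠ 0. Then there exists η > 0 such that A + εI is invertible for every real ε with 0 < |ε| < η, and ε·(A + εI)^{−1} converges to (⟨v,κ⟩)^{−1}·κvᵀ as ε → 0. -/

import Mathlib

open Matrix Filter Topology Polynomial

private lemma eval_charpoly_aux {n : ℕ} (M : Matrix (Fin n) (Fin n) ℝ) (ε : ℝ) :
    (M.charpoly).eval ε = (ε • (1 : Matrix (Fin n) (Fin n) ℝ) - M).det := by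
  rw [Matrix.charpoly, ← Polynomial.coe_evalRingHom, RingHom.map_det]
  congr 1
  ext i j
  by_cases h : i = j
  · subst h
    simp [Matrix.charmatrix_apply_eq, Matrix.one_apply]
  · simp [Matrix.charmatrix_apply_ne _ _ _ h, Matrix.one_apply, h]

private lemma vecMul_smulMatrix {n : ℕ} (c : ℝ) (M : Matrix (Fin n) (Fin n) ℝ)
    (x : Fin n → ℝ) : x ᵥ* (c • M) = c • (x ᵥ* M) := by
  ext j
  simp [Matrix.vecMul, dotProduct, Finset.mul_sum, mul_comm, mul_left_comm]

/-- residue of the resolvent at its simple pole.  With `A = I − Θ`,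
`dim Ker A = 1`, `Aᵀv = 0`, `Aκ = 0`, `⟨v,κ⟩ ≠ 0`, there is `η > 0` such that `A + εI` is
invertible for `0 < |ε| < η`, and `ε·(A+εI)⁻¹ → ⟨v,κ⟩⁻¹·κvᵀ` as `ε → 0`. -/
theorem stmt_13 (m : ℕ) (hm : 1 ≤ m) (Θ : Matrix (Fin m) (Fin m) ℝ)
    (A : Matrix (Fin m) (Fin m) ℝ) (hA : A = 1 - Θ)
    (hker : Module.finrank ℝ (LinearMap.ker A.mulVecLin) = 1)
    (v κ : Fin m → ℝ) (hv : v ≠ 0) (hκ : κ ≠ 0)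
    (hvA : Aᵀ *ᵥ v = 0) (hκA : A *ᵥ κ = 0) (hvκ : v ⬝ᵥ κ ≠ 0) :
    (∃ η : ℝ, 0 < η ∧ ∀ ε : ℝ, 0 < |ε| → |ε| < η →
      IsUnit (A + ε • (1 : Matrix (Fin m) (Fin m) ℝ))) ∧
    Tendsto (fun ε : ℝ => ε • (A + ε • (1 : Matrix (Fin m) (Fin m) ℝ))⁻¹)
      (𝓝[≠] 0) (𝓝 ((v ⬝ᵥ κ)⁻¹ • vecMulVec κ v)) := by
  classical
  -- kernels are spanned by κ and v respectively
  have span_ker : ∀ (M : Matrix (Fin m) (Fin m) ℝ) (w : Fin m → ℝ), w ≠ 0 → M *ᵥ w = 0 →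
      Module.finrank ℝ (LinearMap.ker M.mulVecLin) = 1 →
      ∀ x, M *ᵥ x = 0 → ∃ t : ℝ, x = t • w := by
    intro M w hw hMw hrank x hx
    have hwmem : w ∈ LinearMap.ker M.mulVecLin := by
      simp [LinearMap.mem_ker, Matrix.mulVecLin_apply, hMw]
    have hle : (Submodule.span ℝ {w}) ≤ LinearMap.ker M.mulVecLin := by
      rw [Submodule.span_singleton_le_iff_mem]; exact hwmem
    have heq : (Submodule.span ℝ {w}) = LinearMap.ker M.mulVecLin :=
      Submodule.eq_of_le_of_finrank_eq hle
        (by rw [finrank_span_singleton hw, hrank])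
    have hxmem : x ∈ Submodule.span ℝ {w} := by
      rw [heq]
      simp [LinearMap.mem_ker, Matrix.mulVecLin_apply, hx]
    obtain ⟨t, ht⟩ := Submodule.mem_span_singleton.mp hxmem
    exact ⟨t, ht.symm⟩
  have hkerT : Module.finrank ℝ (LinearMap.ker (Aᵀ).mulVecLin) = 1 := by
    have h1 := LinearMap.finrank_range_add_finrank_ker A.mulVecLin
    have h2 := LinearMap.finrank_range_add_finrank_ker (Aᵀ).mulVecLin
    have h3 : (Aᵀ).rank = A.rank := Matrix.rank_transpose A
    rw [Module.finrank_pi] at h1 h2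
    simp only [Fintype.card_fin] at h1 h2
    unfold Matrix.rank at h3
    omega
  have hkerspanA := span_ker A κ hκ hκA hker
  have hkerspanAT := span_ker Aᵀ v hv hvA hkerT
  have hdetA : A.det = 0 := (Matrix.exists_mulVec_eq_zero_iff).mp ⟨κ, hκ, hκA⟩
  -- the determinant of `A + ε•1` as a polynomial in `ε`
  set P : Polynomial ℝ := (-A).charpoly with hPdef
  have hPeval : ∀ ε : ℝ, P.eval ε = (A + ε • (1 : Matrix (Fin m) (Fin m) ℝ)).det := by
    intro ε
    rw [hPdef, eval_charpoly_aux]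
    rw [sub_neg_eq_add, add_comm]
  have hPne : P ≠ 0 := ((-A).charpoly_monic).ne_zero
  obtain ⟨Q, hPQ⟩ : (X : Polynomial ℝ) ∣ P := by
    rw [Polynomial.X_dvd_iff, Polynomial.coeff_zero_eq_eval_zero, hPeval]
    simpa using hdetA
  have hf : ∀ ε : ℝ, (A + ε • (1 : Matrix (Fin m) (Fin m) ℝ)).det = ε * Q.eval ε := by
    intro ε
    rw [← hPeval, hPQ]
    simp
  -- continuity facts
  have hBc : Continuous fun ε : ℝ => A + ε • (1 : Matrix (Fin m) (Fin m) ℝ) :=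
    continuous_const.add (continuous_id.smul continuous_const)
  have hadjc : Continuous fun ε : ℝ =>
      (A + ε • (1 : Matrix (Fin m) (Fin m) ℝ)).adjugate := hBc.matrix_adjugate
  have hQc : Continuous fun ε : ℝ => Q.eval ε := Q.continuous
  have hvA' : v ᵥ* A = 0 := by rw [← Matrix.mulVec_transpose]; exact hvA
  -- key identity : v ᵥ* adj(A+ε) = Q(ε) • v
  have hvadj : ∀ ε : ℝ,
      v ᵥ* (A + ε • (1 : Matrix (Fin m) (Fin m) ℝ)).adjugate = Q.eval ε • v := by
    have hne : ∀ ε : ℝ, ε ≠ 0 →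
        v ᵥ* (A + ε • (1 : Matrix (Fin m) (Fin m) ℝ)).adjugate = Q.eval ε • v := by
      intro ε hε
      have hvB : v ᵥ* (A + ε • (1 : Matrix (Fin m) (Fin m) ℝ)) = ε • v := by
        rw [Matrix.vecMul_add, hvA', zero_add, vecMul_smulMatrix, Matrix.vecMul_one]
      have h1 : v ᵥ* ((A + ε • (1 : Matrix (Fin m) (Fin m) ℝ)) *
          (A + ε • (1 : Matrix (Fin m) (Fin m) ℝ)).adjugate) = (ε * Q.eval ε) • v := by
        rw [Matrix.mul_adjugate, hf, vecMul_smulMatrix, Matrix.vecMul_one]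
      rw [← Matrix.vecMul_vecMul, hvB, Matrix.smul_vecMul] at h1
      have h2 : ε • (v ᵥ* (A + ε • (1 : Matrix (Fin m) (Fin m) ℝ)).adjugate) =
          ε • (Q.eval ε • v) := by rw [h1, mul_smul]
      exact smul_right_injective _ hε h2
    have hc1 : Continuous fun ε : ℝ =>
        v ᵥ* (A + ε • (1 : Matrix (Fin m) (Fin m) ℝ)).adjugate :=
      (continuous_const : Continuous fun _ : ℝ => v).matrix_vecMul hadjc
    have hc2 : Continuous fun ε : ℝ => Q.eval ε • v := hQc.smul continuous_const
    have heq := Continuous.ext_on (dense_compl_singleton (0 : ℝ)) hc1 hc2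
      (fun ε hε => hne ε hε)
    exact fun ε => congrFun heq ε
  -- the adjugate of A is a multiple of κ vᵀ
  obtain ⟨i0, hi0⟩ : ∃ i, κ i ≠ 0 := by
    by_contra h
    push_neg at h
    exact hκ (funext fun i => h i)
  have hcol : ∀ y, ∃ t : ℝ, A.adjugate *ᵥ y = t • κ := by
    intro y
    apply hkerspanA
    rw [Matrix.mulVec_mulVec, Matrix.mul_adjugate, hdetA]
    simp
  have hrow : ∀ y, ∃ s : ℝ, A.adjugateᵀ *ᵥ y = s • v := by
    intro y
    apply hkerspanAT
    rw [Matrix.mulVec_mulVec, Matrix.adjugate_transpose, Matrix.mul_adjugate,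
      Matrix.det_transpose, hdetA]
    simp
  obtain ⟨e0, he0⟩ := hrow (Pi.single i0 1)
  set c : ℝ := e0 / κ i0 with hcdef
  have hadjA : A.adjugate = c • vecMulVec κ v := by
    ext i j
    obtain ⟨d, hd⟩ := hcol (Pi.single j 1)
    have hdij : A.adjugate i j = d * κ i := by
      have := congrFun hd i
      simpa [Matrix.mulVec_single] using this
    have hdi0 : A.adjugate i0 j = d * κ i0 := by
      have := congrFun hd i0
      simpa [Matrix.mulVec_single] using this
    have he : A.adjugate i0 j = e0 * v j := by
      have := congrFun he0 j
      simpa [Matrix.mulVec_single, Matrix.transpose_apply] using this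
    have hkey : d * κ i0 = e0 * v j := by rw [← hdi0, he]
    have : A.adjugate i j = (e0 / κ i0) * (κ i * v j) := by
      rw [hdij]
      field_simp
      linear_combination κ i * hkey
    simpa [Matrix.smul_apply, Matrix.vecMulVec_apply, hcdef] using this
  -- Q(0) ≠ 0 via the matrix determinant lemma and invertibility of A + κvᵀ
  have hB0 : (A + vecMulVec κ v).det ≠ 0 := by
    rw [Ne, ← Matrix.exists_mulVec_eq_zero_iff]
    rintro ⟨x, hx0, hx⟩
    have hvvx : vecMulVec κ v *ᵥ x = (v ⬝ᵥ x) • κ := by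
      ext i
      simp only [Matrix.mulVec, dotProduct, Matrix.vecMulVec_apply, Pi.smul_apply,
        smul_eq_mul]
      rw [Finset.sum_mul]
      apply Finset.sum_congr rfl
      intro k _
      ring
    have hBx : A *ᵥ x + (v ⬝ᵥ x) • κ = 0 := by
      rw [← hvvx, ← Matrix.add_mulVec, hx]
    have h1 : v ⬝ᵥ (A *ᵥ x) = 0 := by
      rw [Matrix.dotProduct_mulVec, hvA', zero_dotProduct]
    have h2 : (0 : ℝ) = (v ⬝ᵥ x) * (v ⬝ᵥ κ) := by
      have := congrArg (fun y => v ⬝ᵥ y) hBx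
      simpa [dotProduct_add, dotProduct_smul, h1, smul_eq_mul] using this.symm
    have hvx : v ⬝ᵥ x = 0 := by
      rcases mul_eq_zero.mp h2.symm with h | h
      · exact h
      · exact absurd h hvκ
    have hAx : A *ᵥ x = 0 := by
      rw [hvx] at hBx
      simpa using hBx
    obtain ⟨t, rfl⟩ := hkerspanA x hAx
    have : t * (v ⬝ᵥ κ) = 0 := by
      simpa [dotProduct_smul, smul_eq_mul] using hvx
    rcases mul_eq_zero.mp this with h | h
    · exact hx0 (by rw [h, zero_smul])
    · exact hvκ h
  have hdense : Dense {ε : ℝ | (A + ε • (1 : Matrix (Fin m) (Fin m) ℝ)).det ≠ 0} := by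
    have hfin : {ε : ℝ | (A + ε • (1 : Matrix (Fin m) (Fin m) ℝ)).det = 0}.Finite :=
      (Polynomial.finite_setOf_isRoot hPne).subset
        (fun x hx => by simpa [Polynomial.IsRoot, hPeval] using hx)
    have := Set.Countable.dense_compl ℝ hfin.countable
    exact this
  have hdetlem : ∀ ε : ℝ, (A + ε • (1 : Matrix (Fin m) (Fin m) ℝ)).det ≠ 0 →
      (A + ε • (1 : Matrix (Fin m) (Fin m) ℝ) + vecMulVec κ v).det =
        (A + ε • (1 : Matrix (Fin m) (Fin m) ℝ)).det + Q.eval ε * (v ⬝ᵥ κ) := by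
    intro ε hd
    set M := A + ε • (1 : Matrix (Fin m) (Fin m) ℝ) with hM
    have hu : IsUnit M.det := isUnit_iff_ne_zero.mpr hd
    rw [Matrix.vecMulVec_eq Unit κ v, Matrix.det_add_replicateCol_mul_replicateRow hu]
    have hrc : ((1 : Matrix Unit Unit ℝ) + Matrix.replicateRow Unit v * M⁻¹ * Matrix.replicateCol Unit κ).det =
        1 + (v ᵥ* M⁻¹) ⬝ᵥ κ := by
      rw [Matrix.det_unique, Matrix.add_apply, Matrix.one_apply_eq, ← Matrix.replicateRow_vecMul,
        Matrix.replicateRow_mul_replicateCol_apply]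
    rw [hrc, Matrix.inv_def, Ring.inverse_eq_inv, vecMul_smulMatrix, hvadj ε,
      smul_dotProduct, smul_dotProduct, smul_eq_mul, smul_eq_mul]
    field_simp
  have hdetB0 : (A + vecMulVec κ v).det = Q.eval 0 * (v ⬝ᵥ κ) := by
    have hc1 : Continuous fun ε : ℝ =>
        (A + ε • (1 : Matrix (Fin m) (Fin m) ℝ) + vecMulVec κ v).det :=
      (hBc.add continuous_const).matrix_det
    have hc2 : Continuous fun ε : ℝ =>
        (A + ε • (1 : Matrix (Fin m) (Fin m) ℝ)).det + Q.eval ε * (v ⬝ᵥ κ) :=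
      hBc.matrix_det.add (hQc.mul continuous_const)
    have heq := Continuous.ext_on hdense hc1 hc2 (fun ε hε => hdetlem ε hε)
    have h0 := congrFun heq 0
    simpa [hdetA] using h0
  have hQ0 : Q.eval 0 ≠ 0 := by
    intro h
    rw [hdetB0, h, zero_mul] at hB0
    exact hB0 rfl
  -- relation between c and Q(0)
  have hvadj0 : v ᵥ* A.adjugate = Q.eval 0 • v := by
    have := hvadj 0
    simpa using this
  have hscal : c * (v ⬝ᵥ κ) = Q.eval 0 := by
    have h1 : v ᵥ* A.adjugate = (c * (v ⬝ᵥ κ)) • v := by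
      rw [hadjA]
      ext j
      simp only [Matrix.vecMul, dotProduct, Matrix.smul_apply, Matrix.vecMulVec_apply,
        smul_eq_mul, Pi.smul_apply]
      rw [Finset.mul_sum, Finset.sum_mul]
      apply Finset.sum_congr rfl
      intro i _
      ring
    obtain ⟨j0, hj0⟩ : ∃ j, v j ≠ 0 := by
      by_contra h
      push_neg at h
      exact hv (funext fun j => h j)
    have h2 := congrFun (h1.symm.trans hvadj0) j0
    simp only [Pi.smul_apply, smul_eq_mul] at h2
    exact mul_right_cancel₀ hj0 h2
  -- η : invertibility near 0
  have hQev : ∀ᶠ ε : ℝ in 𝓝 0, Q.eval ε ≠ 0 := hQc.continuousAt.eventually_ne hQ0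
  obtain ⟨η, hη, hηQ⟩ : ∃ η : ℝ, 0 < η ∧ ∀ ε : ℝ, |ε| < η → Q.eval ε ≠ 0 := by
    rcases Metric.eventually_nhds_iff.mp hQev with ⟨η, hη, h⟩
    exact ⟨η, hη, fun ε hε => h (by simpa [Real.dist_eq] using hε)⟩
  constructor
  · refine ⟨η, hη, fun ε hε1 hε2 => ?_⟩
    rw [Matrix.isUnit_iff_isUnit_det, isUnit_iff_ne_zero, hf]
    exact mul_ne_zero (by simpa [abs_pos] using hε1) (hηQ ε hε2)
  · -- the limit
    have hcne : c ≠ 0 := by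
      intro h
      rw [h, zero_mul] at hscal
      exact hQ0 hscal.symm
    have hval : (Q.eval 0)⁻¹ • A.adjugate = (v ⬝ᵥ κ)⁻¹ • vecMulVec κ v := by
      rw [hadjA, smul_smul, ← hscal]
      congr 1
      field_simp
    have hg : Tendsto (fun ε : ℝ => (Q.eval ε)⁻¹ •
        (A + ε • (1 : Matrix (Fin m) (Fin m) ℝ)).adjugate) (𝓝 0)
        (𝓝 ((v ⬝ᵥ κ)⁻¹ • vecMulVec κ v)) := by
      have hca : ContinuousAt (fun ε : ℝ => (Q.eval ε)⁻¹ •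
          (A + ε • (1 : Matrix (Fin m) (Fin m) ℝ)).adjugate) 0 :=
        (hQc.continuousAt.inv₀ hQ0).smul hadjc.continuousAt
      have := hca.tendsto
      simpa [hval] using this
    have hEq : (fun ε : ℝ => (Q.eval ε)⁻¹ •
        (A + ε • (1 : Matrix (Fin m) (Fin m) ℝ)).adjugate) =ᶠ[𝓝[≠] (0 : ℝ)]
        (fun ε : ℝ => ε • (A + ε • (1 : Matrix (Fin m) (Fin m) ℝ))⁻¹) := by
      filter_upwards [nhdsWithin_le_nhds hQev, self_mem_nhdsWithin] with ε hQε hε0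
      have hε0' : ε ≠ 0 := hε0
      rw [Matrix.inv_def, Ring.inverse_eq_inv, hf, smul_smul]
      congr 1
      field_simp
    exact Tendsto.congr' hEq (hg.mono_left nhdsWithin_le_nhds)
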